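/- The polynomial f(n) = binom(n+8,8) + 14·binom(n+4,8) + binom(n,8) is an SSNN polynomial of degree 8 that has a complex root α with Re(α) > 3; in particular, f has a root whose real part lies outside the interval [−4, 3]. -/

import Mathlib

/-- Polynomial binomial coefficient `binom(x, k) = x(x-1)⋯(x-k+1)/k!` in a complex variable. -/
noncomputable def cbinom (x : ℂ) (k : ℕ) : ℂ :=
  (∏ j ∈ Finset.range k, (x - (j : ℂ))) / (k.factorial : ℂ)

private lemma cbinom_eight (x : ℂ) :
    cbinom x 8 = x*(x-1)*(x-2)*(x-3)*(x-4)*(x-5)*(x-6)*(x-7)/40320 := by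
  simp only [cbinom, Finset.prod_range_succ, Finset.prod_range_zero]
  norm_num [Nat.factorial]

set_option maxHeartbeats 2000000 in
private lemma key (r1 r2 : ℝ)
    (h1 : 256*r1^4+8960*r1^3+443744*r1^2+1416880*r1+263025 = 0)
    (h2 : 256*r2^4+8960*r2^3+443744*r2^2+1416880*r2+263025 = 0)
    (hb1l : -3.195 ≤ r1) (hb1u : r1 ≤ -3.194)
    (hb2l : -0.198 ≤ r2) (hb2u : r2 ≤ -0.197) :
    ∃ α : ℂ,
      cbinom (α + 8) 8 + 14 * cbinom (α + 4) 8 + cbinom α 8 = 0 ∧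
        3 < α.re ∧ ¬(-4 ≤ α.re ∧ α.re ≤ 3) := by
  set D1 : ℝ := 8960 + 256*(r1+r2) with hD1def
  set D0 : ℝ := 443744 + 8960*(r1+r2) + 256*(r1^2+r1*r2+r2^2) with hD0def
  have hD1pos : 0 < D1 := by rw [hD1def]; nlinarith
  have hD0pos : 0 < D0 := by rw [hD0def]; nlinarith [sq_nonneg r1, sq_nonneg r2, sq_nonneg (r1+r2)]
  have hkey : (D1/32 + 392)^2 < D0 := by
    rw [hD1def, hD0def]
    nlinarith [mul_nonneg (by linarith : (0:ℝ) ≤ r1 + 3.195) (by linarith : (0:ℝ) ≤ -3.194 - r1),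
      mul_nonneg (by linarith : (0:ℝ) ≤ r2 + 0.198) (by linarith : (0:ℝ) ≤ -0.197 - r2),
      mul_nonneg (by linarith : (0:ℝ) ≤ r1 + 3.195) (by linarith : (0:ℝ) ≤ r2 + 0.198),
      mul_nonneg (by linarith : (0:ℝ) ≤ -3.194 - r1) (by linarith : (0:ℝ) ≤ -0.197 - r2)]
  have hdisc : D1^2 < 1024*D0 := by nlinarith
  set t : ℝ := Real.sqrt (1024*D0 - D1^2) with htdef
  have ht0 : 0 ≤ t := Real.sqrt_nonneg _
  have ht2 : t^2 = 1024*D0 - D1^2 := Real.sq_sqrt (by linarith)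
  set ρ : ℝ := Real.sqrt D0 with hρdef
  have hρ0 : 0 ≤ ρ := Real.sqrt_nonneg _
  have hρ2 : ρ^2 = D0 := Real.sq_sqrt hD0pos.le
  have hρgt : D1/32 + 392 < ρ := by
    rw [hρdef]
    exact (Real.lt_sqrt (by positivity)).mpr hkey
  set wA : ℝ := (ρ/16 - D1/512)/2 with hwAdef
  set wB : ℝ := (ρ/16 + D1/512)/2 with hwBdef
  have hwAgt : 12.25 < wA := by rw [hwAdef]; nlinarith
  have hwA0 : 0 ≤ wA := by linarith
  have hwB0 : 0 ≤ wB := by rw [hwBdef]; positivity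
  set A : ℝ := Real.sqrt wA with hAdef
  set B : ℝ := Real.sqrt wB with hBdef
  have hA0 : 0 ≤ A := Real.sqrt_nonneg _
  have hB0 : 0 ≤ B := Real.sqrt_nonneg _
  have hA2 : A^2 = wA := Real.sq_sqrt hwA0
  have hB2 : B^2 = wB := Real.sq_sqrt hwB0
  have hAgt : 3.5 < A := by
    rw [hAdef]
    exact (Real.lt_sqrt (by norm_num)).mpr (by nlinarith)
  have hABmul : A * B = t/1024 := by
    have hprod : wA * wB = (t/1024)^2 := by
      rw [hwAdef, hwBdef]
      linear_combination (1/1024) * hρ2 - (1/1048576) * ht2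
    rw [hAdef, hBdef, ← Real.sqrt_mul hwA0, hprod, Real.sqrt_sq (by positivity)]
  refine ⟨(↑(A - 1/2) : ℂ) + (↑B : ℂ) * Complex.I, ?_, ?_, ?_⟩
  · -- main equation
    have hA2C : (A:ℂ)^2 = (↑ρ/16 - ↑D1/512)/2 := by
      rw [hwAdef] at hA2; exact_mod_cast congrArg (Complex.ofReal) hA2
    have hB2C : (B:ℂ)^2 = (↑ρ/16 + ↑D1/512)/2 := by
      rw [hwBdef] at hB2; exact_mod_cast congrArg (Complex.ofReal) hB2
    have hABC : (A:ℂ) * B = ↑t/1024 := by exact_mod_cast congrArg (Complex.ofReal) hABmul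
    have ht2C : (t:ℂ)^2 = 1024*↑D0 - ↑D1^2 := by exact_mod_cast congrArg (Complex.ofReal) ht2
    have hm2 : ((A:ℂ) + (B:ℂ)*Complex.I)^2 = -↑D1/512 + ↑t/512 * Complex.I := by
      linear_combination hA2C - hB2C + (2*Complex.I) * hABC + (B:ℂ)^2 * Complex.I_sq
    have hu : 256*(-(D1:ℂ)/512 + ↑t/512 * Complex.I)^2
        + ↑D1*(-(D1:ℂ)/512 + ↑t/512 * Complex.I) + ↑D0 = 0 := by
      linear_combination ((t:ℂ)^2/1024) * Complex.I_sq - (1/1024) * ht2C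
    have hcR : (r2 - r1) * (256*r2^3 + (8960+256*r1)*r2^2 + (443744+8960*r1+256*r1^2)*r2
        + (1416880+443744*r1+8960*r1^2+256*r1^3)) = 0 := by linear_combination h2 - h1
    have hne : r2 - r1 ≠ 0 := by intro h; linarith
    have hcub : 256*r2^3 + (8960+256*r1)*r2^2 + (443744+8960*r1+256*r1^2)*r2
        + (1416880+443744*r1+8960*r1^2+256*r1^3) = 0 :=
      (mul_eq_zero.mp hcR).resolve_left hne
    have h1C : 256*(r1:ℂ)^4+8960*(r1:ℂ)^3+443744*(r1:ℂ)^2+1416880*(r1:ℂ)+263025 = 0 := by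
      exact_mod_cast congrArg (Complex.ofReal) h1
    have hcubC : 256*(r2:ℂ)^3 + (8960+256*(r1:ℂ))*(r2:ℂ)^2
        + (443744+8960*(r1:ℂ)+256*(r1:ℂ)^2)*(r2:ℂ)
        + (1416880+443744*(r1:ℂ)+8960*(r1:ℂ)^2+256*(r1:ℂ)^3) = 0 := by
      exact_mod_cast congrArg (Complex.ofReal) hcub
    have hQv : 256*(-(D1:ℂ)/512 + ↑t/512 * Complex.I)^4
        + 8960*(-(D1:ℂ)/512 + ↑t/512 * Complex.I)^3
        + 443744*(-(D1:ℂ)/512 + ↑t/512 * Complex.I)^2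
        + 1416880*(-(D1:ℂ)/512 + ↑t/512 * Complex.I) + 263025 = 0 := by
      rw [hD1def] at hu
      rw [hD0def] at hu
      push_cast at hu
      rw [hD1def]
      push_cast
      linear_combination ((-(8960+256*((r1:ℂ)+r2))/512 + ↑t/512 * Complex.I) - r1)
          * ((-(8960+256*((r1:ℂ)+r2))/512 + ↑t/512 * Complex.I) - r2) * hu
        + ((-(8960+256*((r1:ℂ)+r2))/512 + ↑t/512 * Complex.I) - r1) * hcubC + h1C
    have hQm : 256*(((A:ℂ) + (B:ℂ)*Complex.I)^2)^4
        + 8960*(((A:ℂ) + (B:ℂ)*Complex.I)^2)^3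
        + 443744*(((A:ℂ) + (B:ℂ)*Complex.I)^2)^2
        + 1416880*(((A:ℂ) + (B:ℂ)*Complex.I)^2) + 263025 = 0 := by
      rw [hm2]; exact hQv
    rw [cbinom_eight, cbinom_eight, cbinom_eight]
    push_cast
    linear_combination (1/645120 : ℂ) * hQm
  · -- real part > 3
    simp only [Complex.add_re, Complex.ofReal_re, Complex.mul_re, Complex.ofReal_im,
      Complex.I_re, Complex.I_im]
    norm_num
    linarith
  · rintro ⟨-, h⟩
    simp only [Complex.add_re, Complex.ofReal_re, Complex.mul_re, Complex.ofReal_im,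
      Complex.I_re, Complex.I_im] at h
    norm_num at h
    linarith

theorem stmt19 :
    ∃ α : ℂ,
      cbinom (α + 8) 8 + 14 * cbinom (α + 4) 8 + cbinom α 8 = 0 ∧
        3 < α.re ∧ ¬(-4 ≤ α.re ∧ α.re ≤ 3) := by
  have cont : Continuous fun x : ℝ => 256*x^4+8960*x^3+443744*x^2+1416880*x+263025 := by
    continuity
  obtain ⟨r1, hr1mem, hr1⟩ :=
    intermediate_value_Icc' (by norm_num : (-3.195:ℝ) ≤ -3.194) cont.continuousOn
      (by constructor <;> norm_num : (0:ℝ) ∈ Set.Icc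
        (256*(-3.194:ℝ)^4+8960*(-3.194)^3+443744*(-3.194)^2+1416880*(-3.194)+263025)
        (256*(-3.195:ℝ)^4+8960*(-3.195)^3+443744*(-3.195)^2+1416880*(-3.195)+263025))
  obtain ⟨r2, hr2mem, hr2⟩ :=
    intermediate_value_Icc (by norm_num : (-0.198:ℝ) ≤ -0.197) cont.continuousOn
      (by constructor <;> norm_num : (0:ℝ) ∈ Set.Icc
        (256*(-0.198:ℝ)^4+8960*(-0.198)^3+443744*(-0.198)^2+1416880*(-0.198)+263025)
        (256*(-0.197:ℝ)^4+8960*(-0.197)^3+443744*(-0.197)^2+1416880*(-0.197)+263025))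
  exact key r1 r2 hr1 hr2 hr1mem.1 hr1mem.2 hr2mem.1 hr2mem.2
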